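/- Let e ∈ ℝ^d, e ≠ 0, and let A_1, …, A_n be nonempty closed affine subspaces of ℝ^d. Suppose there exist points a_k ∈ A_k and reals 0 < t_1 < t_2 < ⋯ < t_n < 1 with a_k = t_k · e. Then min over b_k ∈ A_k of ( ‖b_1‖ + Σ_{k=1}^{n−1} ‖b_{k+1} − b_k‖ + ‖e − b_n‖ ) = ‖e‖, attained at (a_1,…,a_n). -/

import Mathlib

lemma fin_telescope {M : Type*} [AddCommGroup M] (m : ℕ) (f : Fin (m + 1) → M) :
    ∑ i : Fin m, (f i.succ - f i.castSucc) = f (Fin.last m) - f 0 := by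
  induction m with
  | zero => simp
  | succ m ih =>
      rw [Fin.sum_univ_castSucc]
      have : ∑ i : Fin m, (f (i.castSucc).succ - f (i.castSucc).castSucc)
          = ∑ i : Fin m, ((f ∘ Fin.castSucc) i.succ - (f ∘ Fin.castSucc) i.castSucc) := by
        apply Finset.sum_congr rfl
        intro i _
        simp [Fin.succ_castSucc, -Fin.castSucc_succ]
      rw [this, ih]
      simp [Fin.succ_last, Fin.castSucc_zero]

/-- If the straight segment from `0` to `e ≠ 0` meets the hinges
`A 0, …, A m` at points `a k = t k • e` with `0 < t 0 < ⋯ < t m < 1` (natural order),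
then the minimal polygonal arc length from `0` to `e` visiting the hinges in order
equals `‖e‖`, attained at `(a 0, …, a m)`. -/
theorem ordered_incidence_gives_min (d m : ℕ) (e : EuclideanSpace ℝ (Fin d)) (he : e ≠ 0)
    (A : Fin (m + 1) → AffineSubspace ℝ (EuclideanSpace ℝ (Fin d)))
    (hne : ∀ k, (A k : Set (EuclideanSpace ℝ (Fin d))).Nonempty)
    (hcl : ∀ k, IsClosed (A k : Set (EuclideanSpace ℝ (Fin d))))
    (a : Fin (m + 1) → EuclideanSpace ℝ (Fin d)) (t : Fin (m + 1) → ℝ)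
    (haA : ∀ k, a k ∈ A k) (hts : StrictMono t)
    (ht0 : 0 < t 0) (ht1 : t (Fin.last m) < 1)
    (hat : ∀ k, a k = t k • e) :
    (‖a 0‖ + (∑ i : Fin m, ‖a i.succ - a i.castSucc‖) + ‖e - a (Fin.last m)‖ = ‖e‖) ∧
    ∀ b : Fin (m + 1) → EuclideanSpace ℝ (Fin d), (∀ k, b k ∈ A k) →
      ‖e‖ ≤ ‖b 0‖ + (∑ i : Fin m, ‖b i.succ - b i.castSucc‖) + ‖e - b (Fin.last m)‖ := by
  constructor
  · have h0 : ‖a 0‖ = t 0 * ‖e‖ := by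
      rw [hat 0, norm_smul, Real.norm_eq_abs, abs_of_pos ht0]
    have hlast : ‖e - a (Fin.last m)‖ = (1 - t (Fin.last m)) * ‖e‖ := by
      rw [hat (Fin.last m)]
      have : e - t (Fin.last m) • e = (1 - t (Fin.last m)) • e := by
        rw [sub_smul, one_smul]
      rw [this, norm_smul, Real.norm_eq_abs, abs_of_pos (by linarith)]
    have hsum : ∀ i : Fin m, ‖a i.succ - a i.castSucc‖
        = (t i.succ - t i.castSucc) * ‖e‖ := by
      intro i
      rw [hat i.succ, hat i.castSucc, ← sub_smul, norm_smul, Real.norm_eq_abs,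
        abs_of_pos (by have := hts i.castSucc_lt_succ; linarith)]
    rw [h0, hlast]
    rw [Finset.sum_congr rfl fun i _ => hsum i, ← Finset.sum_mul,
      fin_telescope m t]
    ring
  · intro b hb
    have key : e = b 0 + (∑ i : Fin m, (b i.succ - b i.castSucc)) + (e - b (Fin.last m)) := by
      rw [fin_telescope m b]; abel
    calc ‖e‖ = ‖b 0 + (∑ i : Fin m, (b i.succ - b i.castSucc)) + (e - b (Fin.last m))‖ := by
              rw [← key]
      _ ≤ ‖b 0 + (∑ i : Fin m, (b i.succ - b i.castSucc))‖ + ‖e - b (Fin.last m)‖ :=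
              norm_add_le _ _
      _ ≤ ‖b 0‖ + ‖∑ i : Fin m, (b i.succ - b i.castSucc)‖ + ‖e - b (Fin.last m)‖ := by
              gcongr; exact norm_add_le _ _
      _ ≤ ‖b 0‖ + (∑ i : Fin m, ‖b i.succ - b i.castSucc‖) + ‖e - b (Fin.last m)‖ := by
              gcongr; exact norm_sum_le _ _
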